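/- For every integer n ≥ 1, all η > 0, and all a, b ∈ ℝ^n, with Φ_η(x) := (2πη)^{−n/2} exp(−‖x‖²/(2η)) the centered Gaussian density of variance η on ℝ^n: ( ∫_{ℝ^n} (Φ_η(v − a) − Φ_η(v − b))² dv )^{1/2} ≤ 2^{−1/2} (4π)^{−n/4} · η^{−(n+2)/4} · ‖a − b‖. -/

import Mathlib

open MeasureTheory

/-- The centered Gaussian density of variance `η` on `ℝⁿ` (Euclidean norm). -/
noncomputable def gaussDen (n : ℕ) (η : ℝ) (x : EuclideanSpace ℝ (Fin n)) : ℝ :=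
  (2 * Real.pi * η) ^ (-(n : ℝ) / 2) * Real.exp (-‖x‖ ^ 2 / (2 * η))

section aux
variable {n : ℕ} {η : ℝ}

lemma integrable_exp_norm (b : ℝ) (hb : 0 < b) :
    Integrable (fun v : EuclideanSpace ℝ (Fin n) ↦ Real.exp (-b * ‖v‖ ^ 2)) := by
  have h := GaussianFourier.integrable_cexp_neg_mul_sq_norm_add
    (V := EuclideanSpace ℝ (Fin n)) (b := (b : ℂ)) (by simpa using hb) 0 0
  refine h.re.congr ?_
  filter_upwards with v
  have : ((-b : ℂ) * (‖v‖:ℂ) ^ 2 + 0 * ((inner ℝ (0 : EuclideanSpace ℝ (Fin n)) v : ℝ) : ℂ) : ℂ)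
      = ((-b * ‖v‖^2 : ℝ) : ℂ) := by push_cast; ring
  rw [this, ← Complex.ofReal_exp]
  exact Complex.ofReal_re _

lemma integral_exp_norm (b : ℝ) (hb : 0 < b) :
    ∫ v : EuclideanSpace ℝ (Fin n), Real.exp (-b * ‖v‖ ^ 2) = (Real.pi / b) ^ ((n : ℝ) / 2) := by
  rw [GaussianFourier.integral_rexp_neg_mul_sq_norm hb]
  norm_num [finrank_euclideanSpace_fin]

lemma integrable_exp_norm_shift (hη : 0 < η) (c : EuclideanSpace ℝ (Fin n)) :
    Integrable (fun v : EuclideanSpace ℝ (Fin n) ↦ Real.exp (-(1/η) * ‖v - c‖ ^ 2)) :=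
  (integrable_exp_norm (1/η) (by positivity)).comp_sub_right c

lemma integral_exp_norm_shift (hη : 0 < η) (c : EuclideanSpace ℝ (Fin n)) :
    ∫ v : EuclideanSpace ℝ (Fin n), Real.exp (-(1/η) * ‖v - c‖ ^ 2)
      = (Real.pi * η) ^ ((n : ℝ) / 2) := by
  have := integral_add_right_eq_self
    (μ := (volume : Measure (EuclideanSpace ℝ (Fin n))))
    (fun v : EuclideanSpace ℝ (Fin n) ↦ Real.exp (-(1/η) * ‖v‖ ^ 2)) (-c)
  simp only [← sub_eq_add_neg] at this
  rw [this, integral_exp_norm (1/η) (by positivity)]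
  rw [div_div_eq_mul_div, div_one]

lemma rpow_sq {x : ℝ} (hx : 0 ≤ x) (p : ℝ) : (x ^ p) ^ 2 = x ^ (2 * p) := by
  rw [← Real.rpow_natCast (x ^ p) 2, ← Real.rpow_mul hx]
  norm_num [mul_comm]

end aux

/-- `L²` translation-continuity estimate for the Gaussian kernel of variance `η`:
`‖Φ_η(· - a) - Φ_η(· - b)‖_{L²} ≤ 2^{-1/2} (4π)^{-n/4} η^{-(n+2)/4} ‖a - b‖`. -/
theorem stmt12 (n : ℕ) (hn : 1 ≤ n) (η : ℝ) (hη : 0 < η)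
    (a b : EuclideanSpace ℝ (Fin n)) :
    Real.sqrt (∫ v : EuclideanSpace ℝ (Fin n),
        (gaussDen n η (v - a) - gaussDen n η (v - b)) ^ 2) ≤
      (2 : ℝ) ^ (-(1 : ℝ) / 2) * (4 * Real.pi) ^ (-(n : ℝ) / 4) *
        η ^ (-((n : ℝ) + 2) / 4) * ‖a - b‖ := by
  have hπ := Real.pi_pos
  set c : ℝ := (2 * Real.pi * η) ^ (-(n : ℝ) / 2) with hc
  have hcpos : 0 < c := Real.rpow_pos_of_pos (by positivity) _
  set m : EuclideanSpace ℝ (Fin n) := (2⁻¹ : ℝ) • (a + b) with hm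
  set d2 : ℝ := ‖a - b‖ ^ 2 with hd2
  -- norm identity
  have hrel : ∀ v : EuclideanSpace ℝ (Fin n),
      ‖v - a‖ ^ 2 + ‖v - b‖ ^ 2 = 2 * ‖v - m‖ ^ 2 + d2 / 2 := by
    intro v
    have hpar := parallelogram_law_with_norm ℝ (v - a) (v - b)
    have h1 : v - a + (v - b) = (2 : ℝ) • (v - m) := by
      rw [hm]; module
    have h2 : v - a - (v - b) = b - a := by abel
    rw [h1, h2, norm_smul, norm_sub_rev] at hpar
    simp only [Real.norm_ofNat, mul_pow] at hpar
    rw [norm_sub_rev m v, norm_sub_rev b a] at hpar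
    rw [hd2]
    nlinarith [hpar]
  -- pointwise identity
  have hpt : ∀ v : EuclideanSpace ℝ (Fin n),
      (gaussDen n η (v - a) - gaussDen n η (v - b)) ^ 2
        = c ^ 2 * Real.exp (-(1/η) * ‖v - a‖ ^ 2) + c ^ 2 * Real.exp (-(1/η) * ‖v - b‖ ^ 2)
          - (2 * c ^ 2 * Real.exp (-d2 / (4 * η))) * Real.exp (-(1/η) * ‖v - m‖ ^ 2) := by
    intro v
    simp only [gaussDen, ← hc]
    have e1 : Real.exp (-‖v - a‖ ^ 2 / (2 * η)) ^ 2 = Real.exp (-(1/η) * ‖v - a‖ ^ 2) := by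
      rw [sq, ← Real.exp_add]; congr 1; field_simp; ring
    have e2 : Real.exp (-‖v - b‖ ^ 2 / (2 * η)) ^ 2 = Real.exp (-(1/η) * ‖v - b‖ ^ 2) := by
      rw [sq, ← Real.exp_add]; congr 1; field_simp; ring
    have e3 : Real.exp (-‖v - a‖ ^ 2 / (2 * η)) * Real.exp (-‖v - b‖ ^ 2 / (2 * η))
        = Real.exp (-d2 / (4 * η)) * Real.exp (-(1/η) * ‖v - m‖ ^ 2) := by
      rw [← Real.exp_add, ← Real.exp_add]; congr 1
      have hsum : -‖v - a‖ ^ 2 / (2 * η) + -‖v - b‖ ^ 2 / (2 * η)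
          = -(‖v - a‖ ^ 2 + ‖v - b‖ ^ 2) / (2 * η) := by ring
      rw [hsum, hrel v]
      field_simp
      ring
    calc (c * Real.exp (-‖v - a‖ ^ 2 / (2 * η)) - c * Real.exp (-‖v - b‖ ^ 2 / (2 * η))) ^ 2
        = c ^ 2 * Real.exp (-‖v - a‖ ^ 2 / (2 * η)) ^ 2
          + c ^ 2 * Real.exp (-‖v - b‖ ^ 2 / (2 * η)) ^ 2
          - 2 * c ^ 2 * (Real.exp (-‖v - a‖ ^ 2 / (2 * η))
              * Real.exp (-‖v - b‖ ^ 2 / (2 * η))) := by ring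
      _ = _ := by rw [e1, e2, e3]; ring
  -- the integral
  have hIa := integrable_exp_norm_shift (n := n) hη a
  have hIb := integrable_exp_norm_shift (n := n) hη b
  have hIm := integrable_exp_norm_shift (n := n) hη m
  have hint : ∫ v : EuclideanSpace ℝ (Fin n),
      (gaussDen n η (v - a) - gaussDen n η (v - b)) ^ 2
      = 2 * c ^ 2 * (Real.pi * η) ^ ((n : ℝ) / 2) * (1 - Real.exp (-d2 / (4 * η))) := by
    simp only [hpt]
    have hAB : Integrable (fun v : EuclideanSpace ℝ (Fin n) ↦
        c ^ 2 * Real.exp (-(1/η) * ‖v - a‖ ^ 2) + c ^ 2 * Real.exp (-(1/η) * ‖v - b‖ ^ 2)) :=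
      (hIa.const_mul (c ^ 2)).add (hIb.const_mul (c ^ 2))
    rw [integral_sub hAB (hIm.const_mul (2 * c ^ 2 * Real.exp (-d2 / (4 * η)))),
      integral_add (hIa.const_mul (c ^ 2)) (hIb.const_mul (c ^ 2)),
      integral_const_mul, integral_const_mul, integral_const_mul,
      integral_exp_norm_shift hη a, integral_exp_norm_shift hη b, integral_exp_norm_shift hη m]
    ring
  -- the bound 1 - exp(-x) ≤ x
  have hx : (0 : ℝ) ≤ d2 / (4 * η) := by positivity
  have hexp : 1 - Real.exp (-d2 / (4 * η)) ≤ d2 / (4 * η) := by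
    have := Real.add_one_le_exp (-(d2 / (4 * η)))
    have heq : -d2 / (4 * η) = -(d2 / (4 * η)) := by ring
    rw [heq]; linarith
  set K0 : ℝ := (2 : ℝ) ^ (-(1 : ℝ) / 2) * (4 * Real.pi) ^ (-(n : ℝ) / 4)
      * η ^ (-((n : ℝ) + 2) / 4) with hK0
  have hK0pos : 0 < K0 := by
    rw [hK0]; positivity
  -- constant identity
  have hconst : 2 * c ^ 2 * (Real.pi * η) ^ ((n : ℝ) / 2) / (4 * η) = K0 ^ 2 := by
    have hc2 : c ^ 2 = 2 ^ (-(n : ℝ)) * (Real.pi ^ (-(n : ℝ)) * η ^ (-(n : ℝ))) := by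
      rw [hc, rpow_sq (by positivity), ← Real.mul_rpow (by positivity) hη.le,
        ← Real.mul_rpow (by norm_num) (by positivity)]
      congr 1 <;> ring
    have hπη : (Real.pi * η) ^ ((n : ℝ) / 2)
        = Real.pi ^ ((n : ℝ) / 2) * η ^ ((n : ℝ) / 2) :=
      Real.mul_rpow hπ.le hη.le
    have hK0sq : K0 ^ 2 = 2⁻¹ * (2 ^ (-(n : ℝ)) * Real.pi ^ (-(n : ℝ) / 2))
        * (η ^ (-(n : ℝ) / 2) * η⁻¹) := by
      rw [hK0, mul_pow, mul_pow, rpow_sq (by norm_num : (0:ℝ) ≤ 2),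
        rpow_sq (by positivity : (0:ℝ) ≤ 4 * Real.pi), rpow_sq hη.le]
      rw [show (2 : ℝ) * (-(1:ℝ)/2) = -1 by ring, Real.rpow_neg_one,
        show (2 : ℝ) * (-(n:ℝ)/4) = -(n:ℝ)/2 by ring,
        show (2 : ℝ) * (-((n:ℝ)+2)/4) = -(n:ℝ)/2 + (-1) by ring,
        Real.rpow_add hη, Real.rpow_neg_one,
        Real.mul_rpow (by norm_num) hπ.le]
      rw [show ((4:ℝ)) = (2:ℝ) ^ (2:ℝ) by
          rw [show ((2:ℝ)^(2:ℝ)) = (2:ℝ)^(2:ℕ) from Real.rpow_natCast 2 2]; norm_num,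
        ← Real.rpow_mul (by norm_num : (0:ℝ) ≤ 2),
        show (2:ℝ) * (-(n:ℝ)/2) = -(n:ℝ) by ring]
    have hmerge : ∀ x : ℝ, 0 < x → x ^ (-(n:ℝ)) * x ^ ((n:ℝ)/2) = x ^ (-(n:ℝ)/2) := by
      intro x hxpos
      rw [← Real.rpow_add hxpos]
      congr 1
      ring
    rw [hc2, hπη, hK0sq]
    rw [show 2 * (2 ^ (-(n:ℝ)) * (Real.pi ^ (-(n:ℝ)) * η ^ (-(n:ℝ))))
        * (Real.pi ^ ((n:ℝ)/2) * η ^ ((n:ℝ)/2)) / (4 * η)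
        = 2⁻¹ * (2 ^ (-(n:ℝ)) * (Real.pi ^ (-(n:ℝ)) * Real.pi ^ ((n:ℝ)/2)))
          * ((η ^ (-(n:ℝ)) * η ^ ((n:ℝ)/2)) * η⁻¹) from by field_simp; ring]
    rw [hmerge Real.pi hπ, hmerge η hη]
  -- put together
  have hI : (∫ v : EuclideanSpace ℝ (Fin n),
      (gaussDen n η (v - a) - gaussDen n η (v - b)) ^ 2) ≤ (K0 * ‖a - b‖) ^ 2 := by
    rw [hint]
    have h1 : 2 * c ^ 2 * (Real.pi * η) ^ ((n : ℝ) / 2) * (1 - Real.exp (-d2 / (4 * η)))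
        ≤ 2 * c ^ 2 * (Real.pi * η) ^ ((n : ℝ) / 2) * (d2 / (4 * η)) := by
      apply mul_le_mul_of_nonneg_left hexp
      positivity
    refine h1.trans (le_of_eq ?_)
    rw [mul_pow, ← hd2, ← hconst]
    ring
  have := Real.sqrt_le_sqrt hI
  rw [Real.sqrt_sq (by positivity : (0:ℝ) ≤ K0 * ‖a - b‖)] at this
  exact this
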